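/- Let a_1, a_2 be odd positive integers with gcd(a_1, a_2) = 1. Then the quotient ⟨a_1, a_2⟩/2 equals the numerical semigroup generated by a_1, a_2, and (a_1 + a_2)/2. -/

import Mathlib

/-- Corollary 3.3 (second part): for coprime odd `a₁, a₂`,
`⟨a₁, a₂⟩/2 = ⟨a₁, a₂, (a₁+a₂)/2⟩`. -/
theorem quotient_two_odd_odd
    (a₁ a₂ : ℕ) (h₁ : 0 < a₁) (h₂ : 0 < a₂)
    (hodd₁ : Odd a₁) (hodd₂ : Odd a₂) (hgcd : Nat.gcd a₁ a₂ = 1) :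
    {m : ℕ | 2 * m ∈ AddSubmonoid.closure ({a₁, a₂} : Set ℕ)} =
      ↑(AddSubmonoid.closure ({a₁, a₂, (a₁ + a₂) / 2} : Set ℕ)) := by
  have hsum : 2 * ((a₁ + a₂) / 2) = a₁ + a₂ := by
    obtain ⟨k, hk⟩ := hodd₁
    obtain ⟨l, hl⟩ := hodd₂
    omega
  have ha1 : a₁ ∈ AddSubmonoid.closure ({a₁, a₂, (a₁ + a₂) / 2} : Set ℕ) :=
    AddSubmonoid.subset_closure (by simp)
  have ha2 : a₂ ∈ AddSubmonoid.closure ({a₁, a₂, (a₁ + a₂) / 2} : Set ℕ) :=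
    AddSubmonoid.subset_closure (by simp)
  have hs : (a₁ + a₂) / 2 ∈ AddSubmonoid.closure ({a₁, a₂, (a₁ + a₂) / 2} : Set ℕ) :=
    AddSubmonoid.subset_closure (by simp)
  have hb1 : a₁ ∈ AddSubmonoid.closure ({a₁, a₂} : Set ℕ) :=
    AddSubmonoid.subset_closure (by simp)
  have hb2 : a₂ ∈ AddSubmonoid.closure ({a₁, a₂} : Set ℕ) :=
    AddSubmonoid.subset_closure (by simp)
  ext m
  simp only [Set.mem_setOf_eq, SetLike.mem_coe]
  constructor
  · intro hm
    rw [AddSubmonoid.mem_closure_pair] at hm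
    obtain ⟨x, y, hxy⟩ := hm
    simp only [smul_eq_mul] at hxy
    have heven : Even (x * a₁ + y * a₂) := ⟨m, by omega⟩
    rcases Nat.even_or_odd x with hx | hx
    · rcases Nat.even_or_odd y with hy | hy
      · obtain ⟨u, hu⟩ := hx
        obtain ⟨v, hv⟩ := hy
        have h2 : 2 * (u * a₁ + v * a₂) = 2 * m := by
          rw [← hxy, hu, hv]; ring
        have hm' : m = u * a₁ + v * a₂ := by omega
        rw [hm']
        exact add_mem (AddSubmonoid.nsmul_mem _ ha1 u) (AddSubmonoid.nsmul_mem _ ha2 v)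
      · exfalso
        rw [Nat.even_add, Nat.even_mul, Nat.even_mul] at heven
        simp [Nat.not_even_iff_odd.2 hy, Nat.not_even_iff_odd.2 hodd₂] at heven
        exact (Nat.not_odd_iff_even.2 hx) heven.1
    · rcases Nat.even_or_odd y with hy | hy
      · exfalso
        rw [Nat.even_add, Nat.even_mul, Nat.even_mul] at heven
        simp [Nat.not_even_iff_odd.2 hx, Nat.not_even_iff_odd.2 hodd₁] at heven
        exact (Nat.not_odd_iff_even.2 hy) heven.1
      · obtain ⟨u, hu⟩ := hx
        obtain ⟨v, hv⟩ := hy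
        have h2 : 2 * (u * a₁ + v * a₂ + (a₁ + a₂) / 2) = 2 * m := by
          rw [mul_add, hsum, ← hxy, hu, hv]; ring
        have hm' : m = u * a₁ + v * a₂ + (a₁ + a₂) / 2 := by omega
        rw [hm']
        exact add_mem (add_mem (AddSubmonoid.nsmul_mem _ ha1 u)
          (AddSubmonoid.nsmul_mem _ ha2 v)) hs
  · intro hm
    have key : AddSubmonoid.closure ({a₁, a₂, (a₁ + a₂) / 2} : Set ℕ) ≤
        { carrier := {m : ℕ | 2 * m ∈ AddSubmonoid.closure ({a₁, a₂} : Set ℕ)},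
          zero_mem' := by
            simpa using (AddSubmonoid.closure ({a₁, a₂} : Set ℕ)).zero_mem,
          add_mem' := fun {a b} ha hb => by
            simp only [Set.mem_setOf_eq] at *
            rw [mul_add]
            exact add_mem ha hb } := by
      rw [AddSubmonoid.closure_le]
      intro z hz
      show 2 * z ∈ AddSubmonoid.closure ({a₁, a₂} : Set ℕ)
      simp only [Set.mem_insert_iff, Set.mem_singleton_iff] at hz
      rcases hz with h | h | h <;> rw [h]
      · rw [two_mul]; exact add_mem hb1 hb1
      · rw [two_mul]; exact add_mem hb2 hb2
      · rw [hsum]; exact add_mem hb1 hb2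
    exact key hm
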